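/- Let E be an n-dimensional nilpotent evolution algebra with strictly upper triangular structure matrix relative to a natural basis {e_1,...,e_n}. If E is spanned by the principal powers u, u^2, ..., u^n of some element u, then all first-superdiagonal structure constants a_{i,i+1} are nonzero (i.e., E has maximum index of nilpotency). -/

import Mathlib

open Submodule

variable {K : Type} [Field K] {E : Type} [AddCommGroup E] [Module K E]

/-- The product of two submodules under a bilinear multiplication. -/
def mulSet (μ : E →ₗ[K] E →ₗ[K] E) (U V : Submodule K E) : Submodule K E :=
  Submodule.span K {z | ∃ u ∈ U, ∃ v ∈ V, z = μ u v}

/-- Derived series starting from a submodule: `dser μ I 0 = I`,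
`dser μ I (k+1) = (dser μ I k)·(dser μ I k)`.  Thus `dser μ ⊤ (k-1) = E^(k)`. -/
def dser (μ : E →ₗ[K] E →ₗ[K] E) (I : Submodule K E) : ℕ → Submodule K E
  | 0 => I
  | k + 1 => mulSet μ (dser μ I k) (dser μ I k)

/-- Lower central-type series: `lowerPow μ k = E^(k+1)` where
`E^1 = E` and `E^(k+1) = Σ_{i=1}^k E^i E^(k+1-i)`. -/
def lowerPow (μ : E →ₗ[K] E →ₗ[K] E) : ℕ → Submodule K E
  | 0 => ⊤
  | k + 1 => ⨆ i : Fin (k + 1), mulSet μ (lowerPow μ i.1) (lowerPow μ (k - i.1))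
  decreasing_by
  · exact i.2
  · omega

/-- A submodule closed under the multiplication. -/
def IsSubalg (μ : E →ₗ[K] E →ₗ[K] E) (U : Submodule K E) : Prop :=
  ∀ x ∈ U, ∀ y ∈ U, μ x y ∈ U

/-- A (two-sided) ideal. -/
def IsIdeal (μ : E →ₗ[K] E →ₗ[K] E) (I : Submodule K E) : Prop :=
  ∀ x ∈ I, ∀ y : E, μ x y ∈ I ∧ μ y x ∈ I

/-- Subalgebra generated by a set. -/
def gen (μ : E →ₗ[K] E →ₗ[K] E) (s : Set E) : Submodule K E :=
  sInf {W | IsSubalg μ W ∧ s ⊆ W}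

/-- Quasi-ideal: the subalgebra generated together with any subalgebra is the vector-space sum. -/
def QuasiIdeal (μ : E →ₗ[K] E →ₗ[K] E) (U : Submodule K E) : Prop :=
  IsSubalg μ U ∧ ∀ V : Submodule K E, IsSubalg μ V → gen μ (↑U ∪ ↑V) = U ⊔ V

/-- The subalgebra lattice is modular. -/
def ModularLat (μ : E →ₗ[K] E →ₗ[K] E) : Prop :=
  ∀ U V W : Submodule K E, IsSubalg μ U → IsSubalg μ V → IsSubalg μ W → U ≤ W →
    gen μ (↑U ∪ ↑(V ⊓ W)) = gen μ (↑U ∪ ↑V) ⊓ W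

/-- The subalgebra lattice is distributive. -/
def DistribLat (μ : E →ₗ[K] E →ₗ[K] E) : Prop :=
  ∀ U V W : Submodule K E, IsSubalg μ U → IsSubalg μ V → IsSubalg μ W →
    gen μ (↑U ∪ ↑(V ⊓ W)) = gen μ (↑U ∪ ↑V) ⊓ gen μ (↑U ∪ ↑W)

/-- Supersolvable: a complete flag of ideals. -/
def Supersolvable (μ : E →ₗ[K] E →ₗ[K] E) : Prop :=
  ∃ I : ℕ → Submodule K E, (∀ i, IsIdeal μ (I i)) ∧ (∀ i, I i ≤ I (i + 1)) ∧
    (∀ i ≤ Module.finrank K E, Module.finrank K (I i) = i) ∧ I (Module.finrank K E) = ⊤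

/-- Maximal subalgebra `A` of the subalgebra `B`. -/
def MaxIn (μ : E →ₗ[K] E →ₗ[K] E) (A B : Submodule K E) : Prop :=
  A ≤ B ∧ A ≠ B ∧ ∀ W : Submodule K E, IsSubalg μ W → A ≤ W → W ≤ B → W = A ∨ W = B

/-- Principal powers: `ppow μ u m = u^(m+1)`, i.e. `ppow μ u 0 = u`,
`ppow μ u (m+1) = (ppow μ u m)·u`. -/
def ppow (μ : E →ₗ[K] E →ₗ[K] E) (u : E) : ℕ → E
  | 0 => u
  | m + 1 => μ (ppow μ u m) u


private lemma repr_mul_eq {n : ℕ} (μ : E →ₗ[K] E →ₗ[K] E) (b : Module.Basis (Fin n) K E)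
    (hnat : ∀ i j : Fin n, i ≠ j → μ (b i) (b j) = 0) (x y : E) (k : Fin n) :
    b.repr (μ x y) k = ∑ i, b.repr x i * b.repr y i * b.repr (μ (b i) (b i)) k := by
  have hxy : μ x y = ∑ i, (b.repr x i * b.repr y i) • μ (b i) (b i) := by
    conv_lhs => rw [← b.sum_repr x, ← b.sum_repr y]
    simp only [map_sum, map_smul, LinearMap.coe_sum, Finset.sum_apply,
      LinearMap.smul_apply]
    refine Finset.sum_congr rfl fun j _ => ?_
    rw [Finset.sum_eq_single j (fun i _ hi => by rw [hnat i j hi]; simp) (by simp),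
      smul_smul, mul_comm ((b.repr y) j)]
  rw [hxy, map_sum, Finset.sum_apply']
  refine Finset.sum_congr rfl fun i _ => ?_
  rw [map_smul, Finsupp.smul_apply, smul_eq_mul, mul_assoc]

private lemma ppow_tri {n : ℕ} (μ : E →ₗ[K] E →ₗ[K] E) (b : Module.Basis (Fin n) K E)
    (hnat : ∀ i j : Fin n, i ≠ j → μ (b i) (b j) = 0)
    (hupper : ∀ i k : Fin n, k ≤ i → b.repr (μ (b i) (b i)) k = 0) (u : E) :
    ∀ m : ℕ, ∀ j : Fin n, j.1 < m → b.repr (ppow μ u m) j = 0 := by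
  intro m
  induction m with
  | zero => intro j hj; omega
  | succ m ih =>
    intro j hj
    show b.repr (μ (ppow μ u m) u) j = 0
    rw [repr_mul_eq μ b hnat]
    refine Finset.sum_eq_zero fun i _ => ?_
    by_cases hi : i.1 < m
    · rw [ih i hi, zero_mul, zero_mul]
    · rw [hupper i j (by omega), mul_zero]

private lemma ppow_diag {n : ℕ} (μ : E →ₗ[K] E →ₗ[K] E) (b : Module.Basis (Fin n) K E)
    (hnat : ∀ i j : Fin n, i ≠ j → μ (b i) (b j) = 0)
    (hupper : ∀ i k : Fin n, k ≤ i → b.repr (μ (b i) (b i)) k = 0) (u : E)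
    (hspan : Submodule.span K (Set.range fun m : Fin n => ppow μ u m.1) = ⊤) :
    ∀ m : Fin n, b.repr (ppow μ u m.1) m ≠ 0 := by
  classical
  have : Module.Finite K E := Module.Finite.of_basis b
  set v : Fin n → E := fun m : Fin n => ppow μ u m.1 with hv
  have hcard : Fintype.card (Fin n) = Module.finrank K E := by
    simp [Module.finrank_eq_card_basis b]
  obtain ⟨b', hb'⟩ : ∃ b' : Module.Basis (Fin n) K E, ⇑b' = v :=
    ⟨_, coe_basisOfTopLeSpanOfCardEqFinrank v (le_of_eq hspan.symm) hcard⟩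
  have hinv : Invertible (b.toMatrix b') := b.invertibleToMatrix b'
  have hdet : (b.toMatrix b').det ≠ 0 := by
    intro h0
    have := Matrix.isUnit_iff_isUnit_det (b.toMatrix b') |>.mp (isUnit_of_invertible _)
    rw [h0] at this
    exact (not_isUnit_zero : ¬ IsUnit (0 : K)) this
  have htri : (b.toMatrix b').BlockTriangular OrderDual.toDual := by
    intro i j hij
    rw [Module.Basis.toMatrix_apply, hb']
    exact ppow_tri μ b hnat hupper u j.1 i hij
  rw [Matrix.det_of_lowerTriangular _ htri] at hdet
  intro m hm
  apply hdet
  refine Finset.prod_eq_zero (Finset.mem_univ m) ?_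
  rw [Module.Basis.toMatrix_apply, hb', hm]

/-- if a nilpotent evolution algebra with strictly upper triangular
structure matrix is spanned by the principal powers `u, u², …, uⁿ` of some element,
then all first-superdiagonal structure constants are nonzero. -/
theorem stmt9 {n : ℕ} (μ : E →ₗ[K] E →ₗ[K] E)
    (hcomm : ∀ x y : E, μ x y = μ y x)
    (b : Module.Basis (Fin n) K E)
    (hnat : ∀ i j : Fin n, i ≠ j → μ (b i) (b j) = 0)
    (hupper : ∀ i k : Fin n, k ≤ i → b.repr (μ (b i) (b i)) k = 0)
    (u : E)
    (hspan : Submodule.span K (Set.range fun m : Fin n => ppow μ u m.1) = ⊤) :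
    ∀ i : ℕ, ∀ h : i + 1 < n,
      b.repr (μ (b ⟨i, by omega⟩) (b ⟨i, by omega⟩)) ⟨i + 1, h⟩ ≠ 0 := by
  intro i h ha
  have hd := ppow_diag μ b hnat hupper u hspan ⟨i + 1, h⟩
  apply hd
  show b.repr (μ (ppow μ u i) u) ⟨i + 1, h⟩ = 0
  rw [repr_mul_eq μ b hnat]
  refine Finset.sum_eq_zero fun j _ => ?_
  by_cases hj : j.1 < i
  · rw [ppow_tri μ b hnat hupper u i j hj, zero_mul, zero_mul]
  · by_cases hj2 : j.1 = i
    · have hje : j = ⟨i, by omega⟩ := Fin.ext hj2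
      rw [hje, ha, mul_zero]
    · rw [hupper j ⟨i + 1, h⟩ (by simp [Fin.le_def]; omega), mul_zero]
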